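/- For every n ≥ 1, every binary sequence of length n satisfies the TGP(1) constraint after a suitable assignment of signs, i.e. B_{3;1}(n) = {0,1}^n; consequently the capacity of the TGP(1) constraint is H_3(1) = 1. In particular, labeling the ones of any binary sequence with alternating signs + , − , + , − , … (in order of occurrence) yields a ternary sequence satisfying the TGP(1) constraint. (Theorem 7) -/
import Mathlib


/-- `x` is a ternary sequence: every entry lies in `{-1, 0, 1} ⊆ ℤ`. -/
def IsTernary {n : ℕ} (x : Fin n → ℤ) : Prop :=
  ∀ i, x i = -1 ∨ x i = 0 ∨ x i = 1

/-- A ternary sequence `x` of length `n` (0-indexed positions) satisfies the TGP(t)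
constraint: for all positions `k, l, m` in the support of `x` (not necessarily
distinct) with `x k = x l = x m` and `max {|k-l|, |l-m|, |m-k|} ≤ t`, if the
integer `k + l - m` is a valid position then it also lies in the support of `x`. -/
def SatisfiesTGPt (t : ℕ) {n : ℕ} (x : Fin n → ℤ) : Prop :=
  ∀ k l m : Fin n, x k ≠ 0 → x k = x l → x l = x m →
    max (max |((k : ℕ) : ℤ) - ((l : ℕ) : ℤ)| |((l : ℕ) : ℤ) - ((m : ℕ) : ℤ)|)
        |((m : ℕ) : ℤ) - ((k : ℕ) : ℤ)| ≤ (t : ℤ) →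
    ∀ i : Fin n, ((i : ℕ) : ℤ) = ((k : ℕ) : ℤ) + ((l : ℕ) : ℤ) - ((m : ℕ) : ℤ) →
      x i ≠ 0

/-- `B3t t n = ξ(T_{3;t}(n))`: binary sequences of length `n` obtainable as
componentwise absolute values of TGP(t)-constrained ternary sequences. -/
def B3t (t n : ℕ) : Set (Fin n → Fin 2) :=
  {y | ∃ x : Fin n → ℤ, IsTernary x ∧ SatisfiesTGPt t x ∧
    y = fun i => if x i = 0 then 0 else 1}

/-- Label the ones of a binary sequence `y` with alternating signs `+, -, +, -, …`
in order of occurrence: the `(p+1)`-st one (with `p` ones strictly before it) gets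
the sign `(-1)^p`. -/
def altSign {n : ℕ} (y : Fin n → Fin 2) : Fin n → ℤ :=
  fun i => if (y i).val = 0 then 0
    else (-1) ^ (Finset.univ.filter (fun j : Fin n => j < i ∧ (y j).val ≠ 0)).card

lemma altSign_ne_zero_iff {n : ℕ} (y : Fin n → Fin 2) (i : Fin n) :
    altSign y i ≠ 0 ↔ (y i).val ≠ 0 := by
  unfold altSign
  by_cases h : (y i).val = 0 <;> simp [h]

lemma altSign_adj {n : ℕ} (y : Fin n → Fin 2) (a b : Fin n)
    (ha : (y a).val ≠ 0) (hb : (y b).val ≠ 0) (hab : (b : ℕ) = (a : ℕ) + 1) :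
    altSign y b = - altSign y a := by
  have hset : Finset.univ.filter (fun j : Fin n => j < b ∧ (y j).val ≠ 0)
      = insert a (Finset.univ.filter (fun j : Fin n => j < a ∧ (y j).val ≠ 0)) := by
    ext j
    simp only [Finset.mem_filter, Finset.mem_insert, Finset.mem_univ, true_and,
      Fin.lt_def, hab]
    constructor
    · rintro ⟨hj, hP⟩
      rcases Nat.lt_succ_iff_lt_or_eq.mp hj with h | h
      · exact Or.inr ⟨h, hP⟩
      · exact Or.inl (Fin.ext h)
    · rintro (rfl | ⟨h, hP⟩)
      · exact ⟨Nat.lt_succ_self _, ha⟩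
      · exact ⟨Nat.lt_succ_of_lt h, hP⟩
  have hnm : a ∉ Finset.univ.filter (fun j : Fin n => j < a ∧ (y j).val ≠ 0) := by
    simp
  unfold altSign
  simp only [ha, hb, if_false, eq_self_iff_true]
  rw [hset, Finset.card_insert_of_notMem hnm, pow_succ]
  ring

lemma altSign_eq_imp {n : ℕ} (y : Fin n → Fin 2) (a b : Fin n)
    (ha : altSign y a ≠ 0) (h : altSign y a = altSign y b)
    (hd : |((a : ℕ) : ℤ) - ((b : ℕ) : ℤ)| ≤ 1) : a = b := by
  have hb : altSign y b ≠ 0 := h ▸ ha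
  have hya : (y a).val ≠ 0 := (altSign_ne_zero_iff y a).mp ha
  have hyb : (y b).val ≠ 0 := (altSign_ne_zero_iff y b).mp hb
  rw [abs_le] at hd
  have hcases : (a : ℕ) = (b : ℕ) ∨ (b : ℕ) = (a : ℕ) + 1 ∨ (a : ℕ) = (b : ℕ) + 1 := by
    omega
  rcases hcases with hc | hc | hc
  · exact Fin.ext hc
  · have := altSign_adj y a b hya hyb hc
    rw [this] at h
    omega
  · have := altSign_adj y b a hyb hya hc
    rw [this] at h
    omega

lemma altSign_key (n : ℕ) (y : Fin n → Fin 2) :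
    IsTernary (altSign y) ∧ SatisfiesTGPt 1 (altSign y) ∧
      (fun i => if altSign y i = 0 then (0 : Fin 2) else 1) = y := by
  refine ⟨?_, ?_, ?_⟩
  · intro i
    unfold altSign
    by_cases h : (y i).val = 0
    · simp [h]
    · simp only [h, if_false]
      rcases Nat.even_or_odd
        ((Finset.univ.filter (fun j : Fin n => j < i ∧ (y j).val ≠ 0)).card) with he | ho
      · right; right; exact he.neg_one_pow
      · left; exact ho.neg_one_pow
  · intro k l m hk hkl hlm hmax i hi
    have h1 : |((k : ℕ) : ℤ) - ((l : ℕ) : ℤ)| ≤ 1 := by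
      have := le_trans (le_max_left _ _) (le_trans (le_max_left _ _) hmax)
      simpa using this
    have h2 : |((k : ℕ) : ℤ) - ((m : ℕ) : ℤ)| ≤ 1 := by
      have := le_trans (le_max_right _ _) hmax
      rw [abs_sub_comm] at this
      simpa using this
    have hkl' : k = l := altSign_eq_imp y k l hk hkl h1
    have hkm' : k = m := altSign_eq_imp y k m hk (hkl.trans hlm) h2
    have : i = k := by
      apply Fin.ext
      have : ((i : ℕ) : ℤ) = ((k : ℕ) : ℤ) := by
        rw [hi, ← hkl', ← hkm']; ring
      exact_mod_cast this
    rw [this]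
    exact hk
  · funext i
    by_cases h : (y i).val = 0
    · have hy : y i = 0 := Fin.ext h
      simp [altSign, h, hy]
    · have hne : altSign y i ≠ 0 := (altSign_ne_zero_iff y i).mpr h
      simp only [hne, if_false]
      have : (y i).val = 1 := by omega
      exact (Fin.ext this.symm)

/-- **Theorem 7.** For every `n ≥ 1`, `B_{3;1}(n) = {0,1}ⁿ`, and consequently the
capacity of the TGP(1) constraint is `H_3(1) = 1`. In particular, labeling the
ones of any binary sequence with alternating signs yields a ternary sequence
satisfying the TGP(1) constraint (whose absolute value is the original sequence). -/
theorem tgp1_full_capacity :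
    (∀ n : ℕ, 1 ≤ n → B3t 1 n = Set.univ) ∧
    Filter.Tendsto (fun n : ℕ => Real.logb 2 (Nat.card ↥(B3t 1 n)) / (n : ℝ))
      Filter.atTop (nhds 1) ∧
    (∀ (n : ℕ) (y : Fin n → Fin 2),
      IsTernary (altSign y) ∧ SatisfiesTGPt 1 (altSign y) ∧
      (fun i => if altSign y i = 0 then (0 : Fin 2) else 1) = y) := by
  have huniv : ∀ n : ℕ, B3t 1 n = Set.univ := by
    intro n
    ext y
    simp only [Set.mem_univ, iff_true, B3t, Set.mem_setOf_eq]
    obtain ⟨h1, h2, h3⟩ := altSign_key n y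
    exact ⟨altSign y, h1, h2, h3.symm⟩
  refine ⟨fun n _ => huniv n, ?_, fun n y => altSign_key n y⟩
  have hcard : ∀ n : ℕ, Nat.card ↥(B3t 1 n) = 2 ^ n := by
    intro n
    rw [huniv n]
    rw [Nat.card_congr (Equiv.Set.univ _)]
    simp [Nat.card_eq_fintype_card]
  have heq : ∀ᶠ n : ℕ in Filter.atTop,
      Real.logb 2 (Nat.card ↥(B3t 1 n)) / (n : ℝ) = 1 := by
    filter_upwards [Filter.eventually_ge_atTop 1] with n hn
    rw [hcard n]
    push_cast
    rw [Real.logb_pow, Real.logb_self_eq_one (b := 2) (by norm_num)]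
    rw [mul_one]
    have : (n : ℝ) ≠ 0 := by positivity
    exact div_self this
  exact Filter.Tendsto.congr' (Filter.EventuallyEq.symm heq) tendsto_const_nhds
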